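/- Let r ≥ 1 and m ≥ 2 be integers. Let P_d denote the space of complex polynomials of degree at most d, so H := (P_{m−1})^{⊕r} has dimension rm. Let δ : H^r → P_{r(m−1)} be the alternating r-multilinear map sending (s_1,…,s_r), with s_i = (s_{i,1},…,s_{i,r}) ∈ (P_{m−1})^{⊕r}, to the determinant of the r×r matrix whose (i,j) entry is the polynomial s_{i,j}. Then the induced linear map ⋀^r H → P_{r(m−1)} is surjective. (This is the determinant map d_E for E = 𝒪_{ℙ^1}(m−1)^{⊕r} on X = ℙ^1.) -/
import Mathlib


open Module ExteriorAlgebra Polynomial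

/-- The determinant of an `r × r` matrix of polynomials, as a `ℂ`-alternating map in the
rows. -/
noncomputable def detAlt (r : ℕ) :
    (Fin r → ℂ[X]) [⋀^Fin r]→ₗ[ℂ] ℂ[X] :=
  { (Matrix.detRowAlternating (R := ℂ[X]) (n := Fin r)).toMultilinearMap.restrictScalars ℂ with
    map_eq_zero_of_eq' := fun v i j hij hne =>
      Matrix.detRowAlternating.map_eq_zero_of_eq v hij hne }

/-- The determinant map `δ : H^r → P_{r(m-1)}` for `H = (P_{m-1})^{⊕ r}`, sending
`(s_1, …, s_r)` to the determinant of the matrix with `(i,j)` entry `s_{i,j}`. -/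
noncomputable def deltaDet (r m : ℕ) :
    (Fin r → (degreeLT ℂ m : Submodule ℂ ℂ[X])) [⋀^Fin r]→ₗ[ℂ] ℂ[X] :=
  (detAlt r).compLinearMap
    (LinearMap.pi fun j =>
      (degreeLT ℂ m : Submodule ℂ ℂ[X]).subtype.comp (LinearMap.proj j))

lemma deltaDet_apply (r m : ℕ) (v : Fin r → (Fin r → (degreeLT ℂ m : Submodule ℂ ℂ[X]))) :
    deltaDet r m v = (Matrix.of fun i j => ((v i j : ℂ[X]))).det := rfl

lemma natDegree_le_of_mem_degreeLT {p : ℂ[X]} {m : ℕ} (hp : p ∈ degreeLT ℂ m) :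
    p.natDegree ≤ m - 1 := by
  by_cases h : p = 0
  · simp [h]
  · have := Polynomial.mem_degreeLT.1 hp
    rw [Polynomial.degree_eq_natDegree h, Nat.cast_lt] at this
    omega

/-- Decompose `k ≤ r * (m-1)` into `r` parts each at most `m-1`. -/
lemma exists_parts (m : ℕ) : ∀ (r k : ℕ), k ≤ r * (m - 1) →
    ∃ e : Fin r → ℕ, (∀ i, e i ≤ m - 1) ∧ ∑ i, e i = k := by
  intro r
  induction r with
  | zero => intro k hk; simp at hk; exact ⟨fun _ => 0, fun i => Nat.zero_le _, by simp [hk]⟩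
  | succ n ih =>
    intro k hk
    rw [Nat.succ_mul] at hk
    obtain ⟨e, he, hesum⟩ := ih (k - min k (m - 1)) (by omega)
    refine ⟨Fin.cons (min k (m - 1)) e, ?_, ?_⟩
    · intro i
      refine Fin.cases ?_ ?_ i
      · simp
      · intro j; simpa using he j
    · rw [Fin.sum_cons, hesum]
      omega

lemma span_range_deltaDet (r m : ℕ) (hm : 1 ≤ m) :
    Submodule.span ℂ (Set.range (deltaDet r m)) = degreeLT ℂ (r * (m - 1) + 1) := by
  apply le_antisymm
  · rw [Submodule.span_le]
    rintro _ ⟨v, rfl⟩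
    rw [deltaDet_apply, SetLike.mem_coe, Matrix.det_apply]
    have key : ∀ σ : Equiv.Perm (Fin r),
        (∏ i, (v (σ i) i : ℂ[X])) ∈ degreeLT ℂ (r * (m - 1) + 1) := by
      intro σ
      set P : ℂ[X] := ∏ i, (v (σ i) i : ℂ[X]) with hP
      by_cases h : P = 0
      · rw [h]; exact Submodule.zero_mem _
      · rw [Polynomial.mem_degreeLT, Polynomial.degree_eq_natDegree h, Nat.cast_lt,
          Nat.lt_succ_iff]
        calc P.natDegree ≤ ∑ i, ((v (σ i) i : ℂ[X])).natDegree :=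
              Polynomial.natDegree_prod_le _ _
          _ ≤ ∑ _i : Fin r, (m - 1) :=
              Finset.sum_le_sum fun i _ => natDegree_le_of_mem_degreeLT (v (σ i) i).2
          _ = r * (m - 1) := by
              rw [Finset.sum_const, Finset.card_univ, Fintype.card_fin, smul_eq_mul]
    refine Submodule.sum_mem _ fun σ _ => ?_
    rcases Int.units_eq_one_or (Equiv.Perm.sign σ) with h | h <;> rw [h]
    · simpa using key σ
    · simpa using Submodule.neg_mem _ (key σ)
  · classical
    rw [Polynomial.degreeLT_eq_span_X_pow, Submodule.span_le]
    intro p hp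
    simp only [Finset.coe_image, Finset.coe_range, Set.mem_image, Set.mem_Iio] at hp
    obtain ⟨k, hk, rfl⟩ := hp
    obtain ⟨e, he, hesum⟩ := exists_parts m r k (Nat.lt_succ_iff.1 hk)
    have hmem : ∀ i : Fin r, (X : ℂ[X]) ^ e i ∈ degreeLT ℂ m := by
      intro i
      rw [Polynomial.mem_degreeLT, Polynomial.degree_X_pow]
      exact_mod_cast lt_of_le_of_lt (he i) (show m - 1 < m by omega)
    set v : Fin r → (Fin r → (degreeLT ℂ m : Submodule ℂ ℂ[X])) :=
      fun i j => if i = j then ⟨X ^ e i, hmem i⟩ else 0 with hv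
    have hdet : deltaDet r m v = X ^ k := by
      rw [deltaDet_apply]
      have hM : (Matrix.of fun i j => ((v i j : ℂ[X]))) =
          Matrix.diagonal fun i => (X : ℂ[X]) ^ e i := by
        ext i j
        by_cases h : i = j <;> simp [hv, Matrix.diagonal, h]
      rw [hM, Matrix.det_diagonal, Finset.prod_pow_eq_pow_sum, hesum]
    exact hdet ▸ Submodule.subset_span ⟨v, rfl⟩

theorem induced_det_map_surjective (r m : ℕ) (hr : 1 ≤ r) (hm : 2 ≤ m)
    (F : (⋀[ℂ]^r (Fin r → (degreeLT ℂ m : Submodule ℂ ℂ[X])) :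
        Submodule ℂ (ExteriorAlgebra ℂ (Fin r → (degreeLT ℂ m : Submodule ℂ ℂ[X])))) →ₗ[ℂ]
      ℂ[X])
    (hF : ∀ v : Fin r → (Fin r → (degreeLT ℂ m : Submodule ℂ ℂ[X])),
      F ⟨ExteriorAlgebra.ιMulti ℂ r v, ExteriorAlgebra.ιMulti_range ℂ r ⟨v, rfl⟩⟩ =
        deltaDet r m v) :
    LinearMap.range F = degreeLT ℂ (r * (m - 1) + 1) := by
  let T : Submodule ℂ (ExteriorAlgebra ℂ (Fin r → (degreeLT ℂ m : Submodule ℂ ℂ[X]))) :=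
    ⋀[ℂ]^r (Fin r → (degreeLT ℂ m : Submodule ℂ ℂ[X]))
  let g : (Fin r → (Fin r → (degreeLT ℂ m : Submodule ℂ ℂ[X]))) → T := fun v =>
    ⟨ExteriorAlgebra.ιMulti ℂ r v, ExteriorAlgebra.ιMulti_range ℂ r ⟨v, rfl⟩⟩
  have hspan : Submodule.span ℂ (Set.range g) = (⊤ : Submodule ℂ T) := by
    apply Submodule.map_injective_of_injective T.injective_subtype
    rw [Submodule.map_span, Submodule.map_top, Submodule.range_subtype]
    have himg : T.subtype '' (Set.range g) =
        Set.range (ExteriorAlgebra.ιMulti ℂ r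
          (M := Fin r → (degreeLT ℂ m : Submodule ℂ ℂ[X]))) := by
      ext x
      constructor
      · rintro ⟨_, ⟨v, rfl⟩, rfl⟩; exact ⟨v, rfl⟩
      · rintro ⟨v, rfl⟩; exact ⟨g v, ⟨v, rfl⟩, rfl⟩
    rw [himg, ExteriorAlgebra.ιMulti_span_fixedDegree]
  have hcomp : (⇑F ∘ g) = ⇑(deltaDet r m) := funext fun v => hF v
  have hrange : LinearMap.range F = Submodule.span ℂ (Set.range (deltaDet r m)) := by
    rw [LinearMap.range_eq_map, ← hspan, Submodule.map_span, ← Set.range_comp, hcomp]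
  rw [hrange, span_range_deltaDet r m (by omega)]
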